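/- (Failure/prediction of the Madelung rule in the large-Z limit.) For an orbital o let c(o) denote its capacity and let B(o) = Σ_{o′ strictly preceding o} c(o′). For integers Z ≥ 1 and ℓ ≥ 0, define the Madelung occupation number N_ℓ(Z) = Σ_{ν ≥ ℓ+1} min( max(Z − B(ν,ℓ), 0), 2(2ℓ+1) ), i.e. the number of electrons with angular momentum ℓ when Z electrons fill the orbitals in Madelung order. Then for every λ > 0, with ℓ_Z = ⌈λ·Z^{1/3}⌉, one has lim_{Z→∞} N_{ℓ_Z}(Z) / ( 2(2ℓ_Z+1)·Z^{1/3} ) = max{6^{1/3} − 2λ, 0} = κ^Madelung(λ). -/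

import Mathlib

open Finset Filter Real

/-- The (finite) set of orbitals `(ν', ℓ')` (with `ν' ≥ ℓ' + 1`) strictly preceding the
orbital `o = (ν, ℓ)` in the Madelung order: `ν' + ℓ' < ν + ℓ`, or
`ν' + ℓ' = ν + ℓ` and `ν' < ν`. -/
def madelungPred (o : ℕ × ℕ) : Finset (ℕ × ℕ) :=
  (Finset.range (o.1 + o.2 + 1) ×ˢ Finset.range (o.1 + o.2 + 1)).filter
    (fun p => p.2 + 1 ≤ p.1 ∧
      (p.1 + p.2 < o.1 + o.2 ∨ (p.1 + p.2 = o.1 + o.2 ∧ p.1 < o.1)))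

/-- `B(o)`: the number of electrons in orbitals strictly preceding `o` in the Madelung
order, i.e. the sum of the capacities `2(2ℓ'+1)` of the preceding orbitals. -/
def madelungB (o : ℕ × ℕ) : ℕ := ∑ p ∈ madelungPred o, 2 * (2 * p.2 + 1)

/-- `N_ℓ(Z)`: the number of electrons with angular momentum `ℓ` when `Z` electrons fill
the orbitals in Madelung order. -/
noncomputable def madelungN (ℓ Z : ℕ) : ℝ :=
  ∑' ν : ℕ, if ℓ + 1 ≤ ν then
    min (max ((Z : ℝ) - (madelungB (ν, ℓ) : ℝ)) 0) (2 * (2 * (ℓ : ℝ) + 1)) else 0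


/- ### Combinatorial part -/


lemma oddsum (m : ℕ) : ∑ b ∈ Finset.range m, 2 * (2 * b + 1) = 2 * m ^ 2 := by
  induction m with
  | zero => simp
  | succ k ih => rw [Finset.sum_range_succ, ih]; ring

def msum (n : ℕ) : ℕ := ∑ b ∈ Finset.range (n + 1), 2 * (2 * b + 1) * (n - 2 * b)

lemma msum_succ (n : ℕ) : msum (n + 1) = msum n + 2 * (n / 2 + 1) ^ 2 := by
  unfold msum
  rw [Finset.sum_range_succ]
  have hz : n + 1 - 2 * (n+1) = 0 := by omega
  have h0 : 2 * (2 * (n+1) + 1) * (n + 1 - 2 * (n+1)) = 0 := by rw [hz, Nat.mul_zero]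
  rw [h0, add_zero]
  have hsplit : ∀ b ∈ Finset.range (n+1),
      2 * (2 * b + 1) * (n + 1 - 2 * b)
        = 2 * (2 * b + 1) * (n - 2 * b) + (if 2 * b ≤ n then 2 * (2*b+1) else 0) := by
    intro b _
    rcases le_or_gt (2*b) n with h | h
    · rw [if_pos h]
      have : n + 1 - 2*b = (n - 2*b) + 1 := by omega
      rw [this, Nat.mul_succ]
    · rw [if_neg (by omega)]
      have h1 : n + 1 - 2*b = 0 ∨ n + 1 - 2 * b = 1 := by omega
      have h2 : n - 2*b = 0 := by omega
      rcases h1 with h1 | h1 <;> rw [h1, h2] <;> omega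
  rw [Finset.sum_congr rfl hsplit, Finset.sum_add_distrib]
  congr 1
  rw [Finset.sum_ite, Finset.sum_const_zero, add_zero]
  have hfe : (Finset.range (n+1)).filter (fun b => 2 * b ≤ n) = Finset.range (n/2 + 1) := by
    ext a; simp [Finset.mem_filter, Finset.mem_range]; omega
  rw [hfe, oddsum]

lemma msum_bounds (n : ℕ) : n ^ 3 ≤ 6 * msum n ∧ 6 * msum n ≤ (n + 2) ^ 3 := by
  induction n with
  | zero => unfold msum; simp
  | succ k ih =>
    obtain ⟨h1, h2⟩ := ih
    rw [msum_succ, Nat.mul_add]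
    constructor
    · rcases Nat.even_or_odd k with ⟨m, rfl⟩ | ⟨m, rfl⟩
      · have hq : (m + m) / 2 = m := by omega
        rw [hq]; nlinarith
      · have hq : (2 * m + 1) / 2 = m := by omega
        rw [hq]; nlinarith
    · rcases Nat.even_or_odd k with ⟨m, rfl⟩ | ⟨m, rfl⟩
      · have hq : (m + m) / 2 = m := by omega
        rw [hq]; nlinarith
      · have hq : (2 * m + 1) / 2 = m := by omega
        rw [hq]; nlinarith

lemma madelungB_formula (ν ℓ : ℕ) (h : ℓ + 1 ≤ ν) :
    madelungB (ν, ℓ) + 2 * (ℓ + 1) ^ 2 = msum (ν + ℓ) := by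
  set n := ν + ℓ with hn
  have key : madelungB (ν, ℓ)
      = ∑ b ∈ Finset.range (n + 1), 2 * (2 * b + 1) *
          ((if ℓ < b then n + 1 - b else n - b) - (b + 1)) := by
    unfold madelungB madelungPred
    rw [Finset.sum_filter, Finset.sum_product, Finset.sum_comm]
    refine Finset.sum_congr rfl ?_
    intro b hbmem
    have hbn : b < n + 1 := Finset.mem_range.mp hbmem
    dsimp only
    have hcard : (Finset.range (n + 1)).filter
        (fun a => b + 1 ≤ a ∧ (a + b < ν + ℓ ∨ (a + b = ν + ℓ ∧ a < ν)))
        = Finset.Ico (b + 1) (if ℓ < b then n + 1 - b else n - b) := by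
      ext a
      simp only [Finset.mem_filter, Finset.mem_range, Finset.mem_Ico]
      split_ifs with hb
      · omega
      · omega
    rw [← Finset.sum_filter, hcard, Finset.sum_const, Nat.card_Ico, smul_eq_mul, mul_comm]
  rw [key]
  have h2 : 2 * (ℓ + 1) ^ 2 = ∑ b ∈ Finset.range (n + 1), (if b ≤ ℓ then 2 * (2 * b + 1) else 0) := by
    rw [Finset.sum_ite, Finset.sum_const_zero, add_zero]
    have he : (Finset.range (n + 1)).filter (fun b => b ≤ ℓ) = Finset.range (ℓ + 1) := by
      ext a; simp only [Finset.mem_filter, Finset.mem_range]; omega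
    rw [he, oddsum]
  rw [h2, ← Finset.sum_add_distrib]
  unfold msum
  refine Finset.sum_congr rfl ?_
  intro b _
  split_ifs with hb hc hc
  · exact absurd hc (by omega)
  · have e1 : n + 1 - b - (b + 1) = n - 2 * b := by omega
    rw [e1, add_zero]
  · have e1 : n - b - (b + 1) = n - 2 * b - 1 := by omega
    rw [e1, ← Nat.mul_succ]
    congr 1
    omega
  · exact absurd hb (by omega)

lemma madelungB_bounds (ν l : ℕ) (h : l + 1 ≤ ν) :
    (ν + l) ^ 3 ≤ 6 * madelungB (ν, l) + 12 * (l + 1) ^ 2 ∧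
    6 * madelungB (ν, l) + 12 * (l + 1) ^ 2 ≤ (ν + l + 2) ^ 3 := by
  have hf := madelungB_formula ν l h
  have h6 : 6 * madelungB (ν, l) + 12 * (l + 1) ^ 2 = 6 * msum (ν + l) := by
    rw [← hf]; ring
  rw [h6]
  exact ⟨(msum_bounds _).1, (msum_bounds _).2⟩

/- ### From tsum to a finite sum -/

lemma madelungN_eq_sum (l Z : ℕ) :
    madelungN l Z = ∑ ν ∈ Finset.range (6*Z + 12*(l+1)^2 + 1),
      (if l + 1 ≤ ν then
        min (max ((Z : ℝ) - (madelungB (ν, l) : ℝ)) 0) (2 * (2 * (l : ℝ) + 1)) else 0) := by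
  refine tsum_eq_sum ?_
  intro ν hν
  rw [Finset.mem_range, not_lt] at hν
  have hsq : l + 1 ≤ (l + 1) ^ 2 := Nat.le_self_pow (by norm_num) _
  have hl : l + 1 ≤ ν := by
    have : 12 * (l + 1) ≤ 12 * (l+1)^2 := by omega
    omega
  rw [if_pos hl]
  have hb := (madelungB_bounds ν l hl).1
  have h4 : ν + l ≤ (ν + l) ^ 3 := Nat.le_self_pow (by norm_num) _
  have hZB : Z ≤ madelungB (ν, l) := by
    have h5 : 6*Z + 12*(l+1)^2 + 1 ≤ (ν + l) ^ 3 := by omega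
    omega
  have hle : (Z:ℝ) - (madelungB (ν, l) : ℝ) ≤ 0 := by
    have := Nat.cast_le (α := ℝ) |>.mpr hZB
    linarith
  rw [max_eq_right hle]
  exact min_eq_left (by positivity)

lemma madelungN_nonneg (l Z : ℕ) : 0 ≤ madelungN l Z := by
  refine tsum_nonneg ?_
  intro ν
  by_cases h : l + 1 ≤ ν
  · rw [if_pos h]
    exact le_min (le_max_right _ _) (by positivity)
  · rw [if_neg h]

/- ### Upper and lower bounds on `madelungN` via counting -/

lemma cast_natsub_le_max (a b : ℕ) : ((a - b : ℕ) : ℝ) ≤ max ((a:ℝ) - (b:ℝ)) 0 := by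
  rcases le_total b a with h | h
  · rw [Nat.cast_sub h]; exact le_max_left _ _
  · rw [Nat.sub_eq_zero_of_le h]; simpa using le_max_right _ (0:ℝ)

lemma madelungN_upper (l Z u : ℕ)
    (hu : ∀ ν : ℕ, l + 1 ≤ ν → (ν+l)^3 < 6*Z + 12*(l+1)^2 → ν + l ≤ u) :
    madelungN l Z ≤ (2 * (2 * (l:ℝ) + 1)) * max ((u:ℝ) - 2*(l:ℝ)) 0 := by
  set C : ℝ := 2 * (2 * (l:ℝ) + 1) with hC
  have hC0 : (0:ℝ) ≤ C := by positivity
  rw [madelungN_eq_sum]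
  set M := 6*Z + 12*(l+1)^2 + 1 with hM
  have step1 : (∑ ν ∈ Finset.range M, (if l + 1 ≤ ν then
      min (max ((Z : ℝ) - (madelungB (ν, l) : ℝ)) 0) C else 0))
      ≤ ∑ ν ∈ Finset.range M, (if l + 1 ≤ ν ∧ (ν+l)^3 < 6*Z + 12*(l+1)^2 then C else 0) := by
    refine Finset.sum_le_sum ?_
    intro ν _
    by_cases h1 : l + 1 ≤ ν
    · rw [if_pos h1]
      by_cases h2 : (ν+l)^3 < 6*Z + 12*(l+1)^2
      · rw [if_pos ⟨h1, h2⟩]; exact min_le_right _ _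
      · rw [if_neg (by tauto)]
        have hb := (madelungB_bounds ν l h1).1
        have hZB : Z ≤ madelungB (ν, l) := by
          have h3 := not_lt.mp h2
          omega
        have hle : (Z:ℝ) - (madelungB (ν, l) : ℝ) ≤ 0 := by
          have := Nat.cast_le (α := ℝ) |>.mpr hZB
          linarith
        rw [max_eq_right hle, min_eq_left hC0]
    · rw [if_neg h1, if_neg (by tauto)]
  have step2 : (∑ ν ∈ Finset.range M, (if l + 1 ≤ ν ∧ (ν+l)^3 < 6*Z + 12*(l+1)^2 then C else 0))
      = ((Finset.range M).filter (fun ν => l + 1 ≤ ν ∧ (ν+l)^3 < 6*Z + 12*(l+1)^2)).card • C := by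
    rw [← Finset.sum_filter, Finset.sum_const]
  have hsub : (Finset.range M).filter (fun ν => l + 1 ≤ ν ∧ (ν+l)^3 < 6*Z + 12*(l+1)^2)
      ⊆ Finset.Ico (l+1) (u + 1 - l) := by
    intro ν hν
    rw [Finset.mem_filter] at hν
    obtain ⟨-, h1, h2⟩ := hν
    have h3 := hu ν h1 h2
    rw [Finset.mem_Ico]
    omega
  have hcard : ((Finset.range M).filter (fun ν => l + 1 ≤ ν ∧ (ν+l)^3 < 6*Z + 12*(l+1)^2)).card
      ≤ (u + 1 - l) - (l + 1) := by
    have := Finset.card_le_card hsub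
    rwa [Nat.card_Ico] at this
  calc (∑ ν ∈ Finset.range M, (if l + 1 ≤ ν then
      min (max ((Z : ℝ) - (madelungB (ν, l) : ℝ)) 0) C else 0))
      ≤ ((Finset.range M).filter (fun ν => l + 1 ≤ ν ∧ (ν+l)^3 < 6*Z + 12*(l+1)^2)).card • C := by
        rw [← step2]; exact step1
    _ = (((Finset.range M).filter (fun ν => l + 1 ≤ ν ∧ (ν+l)^3 < 6*Z + 12*(l+1)^2)).card : ℝ) * C := by
        rw [nsmul_eq_mul]
    _ ≤ (((u + 1 - l) - (l + 1) : ℕ) : ℝ) * C := by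
        apply mul_le_mul_of_nonneg_right _ hC0
        exact_mod_cast hcard
    _ ≤ max ((u:ℝ) - 2*(l:ℝ)) 0 * C := by
        apply mul_le_mul_of_nonneg_right _ hC0
        calc (((u + 1 - l) - (l + 1) : ℕ) : ℝ) ≤ ((u - 2*l : ℕ) : ℝ) := by
              have : (u + 1 - l) - (l + 1) ≤ u - 2*l := by omega
              exact_mod_cast this
          _ ≤ max ((u:ℝ) - 2*(l:ℝ)) 0 := by
              have := cast_natsub_le_max u (2*l)
              simpa using this
    _ = C * max ((u:ℝ) - 2*(l:ℝ)) 0 := mul_comm _ _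

lemma madelungN_lower (l Z t : ℕ)
    (ht : ((t:ℝ))^3 ≤ 6*(Z:ℝ) - 6*(2 * (2 * (l:ℝ) + 1))) :
    (2 * (2 * (l:ℝ) + 1)) * ((t:ℝ) - 2*(l:ℝ) - 2) ≤ madelungN l Z := by
  set C : ℝ := 2 * (2 * (l:ℝ) + 1) with hC
  have hC0 : (0:ℝ) ≤ C := by positivity
  rcases le_or_gt t (2*l + 2) with hsmall | hbig
  · have h1 : (t:ℝ) - 2*(l:ℝ) - 2 ≤ 0 := by
      have : (t:ℝ) ≤ 2*(l:ℝ) + 2 := by exact_mod_cast hsmall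
      linarith
    calc C * ((t:ℝ) - 2*(l:ℝ) - 2) ≤ 0 := mul_nonpos_of_nonneg_of_nonpos hC0 h1
      _ ≤ madelungN l Z := madelungN_nonneg l Z
  · -- t ≥ 2l + 3
    have ht6 : t ≤ 6 * Z := by
      by_contra hcon
      push_neg at hcon
      have h1 : (1:ℝ) ≤ (t:ℝ) := by
        have : 1 ≤ t := by omega
        exact_mod_cast this
      have h2 : ((6*Z : ℕ) : ℝ) < (t:ℝ) := by exact_mod_cast hcon
      have h3 : (t:ℝ) ≤ (t:ℝ)^3 := by
        have h0 : (0:ℝ) ≤ (t:ℝ) := by positivity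
        nlinarith [mul_nonneg (mul_nonneg (sub_nonneg.mpr h1) h0) (by linarith : (0:ℝ) ≤ (t:ℝ) + 1)]
      have h4 : (0:ℝ) ≤ C := hC0
      push_cast at h2
      nlinarith
    rw [madelungN_eq_sum]
    set M := 6*Z + 12*(l+1)^2 + 1 with hM
    have hM6 : 6*Z < M := by
      calc 6*Z ≤ 6*Z + 12*(l+1)^2 := Nat.le_add_right _ _
        _ < M := Nat.lt_succ_self _
    have hsub : Finset.Ico (l+1) (t - l - 1) ⊆ Finset.range M := by
      intro a ha
      rw [Finset.mem_Ico] at ha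
      rw [Finset.mem_range]
      omega
    have hterm : ∀ ν ∈ Finset.Ico (l+1) (t - l - 1),
        (if l + 1 ≤ ν then
          min (max ((Z : ℝ) - (madelungB (ν, l) : ℝ)) 0) C else 0) = C := by
      intro ν hν
      rw [Finset.mem_Ico] at hν
      obtain ⟨h1, h2⟩ := hν
      rw [if_pos h1]
      have h3 : ν + l + 2 ≤ t := by omega
      have h4 : (ν + l + 2)^3 ≤ t^3 := Nat.pow_le_pow_left h3 3
      have h5 := (madelungB_bounds ν l h1).2
      have h6 : 6 * madelungB (ν, l) + 12 * (l+1)^2 ≤ t^3 := le_trans h5 h4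
      have h7 : (6 * madelungB (ν, l) : ℝ) + 12 * ((l:ℝ)+1)^2 ≤ (t:ℝ)^3 := by
        exact_mod_cast h6
      have h8 : (madelungB (ν, l) : ℝ) + C ≤ (Z:ℝ) := by nlinarith [sq_nonneg ((l:ℝ)+1)]
      have h9 : C ≤ (Z:ℝ) - (madelungB (ν, l) : ℝ) := by linarith
      rw [max_eq_left (by linarith), min_eq_right h9]
    have hge : ∀ ν ∈ Finset.range M, 0 ≤ (if l + 1 ≤ ν then
        min (max ((Z : ℝ) - (madelungB (ν, l) : ℝ)) 0) C else 0) := by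
      intro ν _
      by_cases h : l + 1 ≤ ν
      · rw [if_pos h]; exact le_min (le_max_right _ _) hC0
      · rw [if_neg h]
    calc C * ((t:ℝ) - 2*(l:ℝ) - 2)
        ≤ C * (((t - l - 1) - (l+1) : ℕ) : ℝ) := by
          apply mul_le_mul_of_nonneg_left _ hC0
          have he : (t - l - 1) - (l+1) = t - (2*l + 2) := by omega
          rw [he, Nat.cast_sub (by omega)]
          push_cast
          linarith
      _ = ∑ ν ∈ Finset.Ico (l+1) (t - l - 1), (if l + 1 ≤ ν then
            min (max ((Z : ℝ) - (madelungB (ν, l) : ℝ)) 0) C else 0) := by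
          rw [Finset.sum_congr rfl hterm, Finset.sum_const, Nat.card_Ico, nsmul_eq_mul, mul_comm]
      _ ≤ ∑ ν ∈ Finset.range M, (if l + 1 ≤ ν then
            min (max ((Z : ℝ) - (madelungB (ν, l) : ℝ)) 0) C else 0) := by
          apply Finset.sum_le_sum_of_subset_of_nonneg hsub
          intro ν hν _
          exact hge ν hν


noncomputable def pZ (Z : ℕ) : ℝ := (Z:ℝ) ^ ((1:ℝ)/3)




lemma pZ_pos {Z : ℕ} (h : 1 ≤ Z) : 0 < pZ Z := by
  unfold pZ
  apply Real.rpow_pos_of_pos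
  exact_mod_cast h

lemma pZ_cube {Z : ℕ} : (pZ Z)^(3:ℕ) = (Z:ℝ) := by
  unfold pZ
  rw [← Real.rpow_natCast ((Z:ℝ) ^ ((1:ℝ)/3)) 3, ← Real.rpow_mul (Nat.cast_nonneg Z)]
  norm_num

lemma tendsto_pZ : Tendsto pZ atTop atTop :=
  (tendsto_rpow_atTop (by norm_num)).comp tendsto_natCast_atTop_atTop

lemma tendsto_pZ_inv : Tendsto (fun Z => (pZ Z)⁻¹) atTop (nhds 0) :=
  tendsto_pZ.inv_tendsto_atTop

lemma tendsto_pZ_div : Tendsto (fun Z : ℕ => pZ Z / (Z:ℝ)) atTop (nhds 0) := by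
  have h1 : Tendsto (fun Z : ℕ => ((Z:ℝ)) ^ (-(2:ℝ)/3)) atTop (nhds 0) := by
    have := (tendsto_rpow_neg_atTop (by norm_num : (0:ℝ) < 2/3)).comp
      (tendsto_natCast_atTop_atTop (R := ℝ))
    convert this using 2 with Z
    norm_num
  refine h1.congr' ?_
  filter_upwards [eventually_ge_atTop 1] with Z hZ
  have hZ0 : (0:ℝ) < (Z:ℝ) := by exact_mod_cast hZ
  unfold pZ
  rw [show (-(2:ℝ)/3) = (1:ℝ)/3 - 1 by norm_num, Real.rpow_sub hZ0, Real.rpow_one]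

/-- If `a Z / Z^{1/3}` converges then `a Z / Z → 0` -/
lemma tendsto_div_Z_of_div_pZ (a : ℕ → ℝ) (A : ℝ)
    (ha : Tendsto (fun Z => a Z / pZ Z) atTop (nhds A)) :
    Tendsto (fun Z : ℕ => a Z / (Z:ℝ)) atTop (nhds 0) := by
  have h := ha.mul tendsto_pZ_div
  rw [mul_zero] at h
  refine h.congr' ?_
  filter_upwards [eventually_ge_atTop 1] with Z hZ
  have hp : pZ Z ≠ 0 := ne_of_gt (pZ_pos hZ)
  field_simp

/-- floor of cube root, normalized -/
lemma tendsto_floor_cbrt (f : ℕ → ℝ)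
    (hf : Tendsto (fun Z : ℕ => f Z / (Z:ℝ)) atTop (nhds 6)) :
    Tendsto (fun Z : ℕ => (⌊(f Z) ^ ((1:ℝ)/3)⌋₊ : ℝ) / pZ Z) atTop
      (nhds ((6:ℝ) ^ ((1:ℝ)/3))) := by
  have hev : ∀ᶠ Z : ℕ in atTop, 0 ≤ f Z := by
    filter_upwards [hf.eventually (eventually_ge_nhds (by norm_num : (5:ℝ) < 6)),
      eventually_ge_atTop 1] with Z h1 h2
    have hZ0 : (0:ℝ) < (Z:ℝ) := by exact_mod_cast h2
    have := (le_div_iff₀ hZ0).mp h1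
    linarith
  have hg : Tendsto (fun Z : ℕ => (f Z / (Z:ℝ)) ^ ((1:ℝ)/3)) atTop
      (nhds ((6:ℝ) ^ ((1:ℝ)/3))) :=
    ((Real.continuousAt_rpow_const 6 ((1:ℝ)/3) (Or.inl (by norm_num))).tendsto).comp hf
  have hgg : Tendsto (fun Z : ℕ => (f Z) ^ ((1:ℝ)/3) / pZ Z) atTop
      (nhds ((6:ℝ) ^ ((1:ℝ)/3))) := by
    refine hg.congr' ?_
    filter_upwards [hev, eventually_ge_atTop 1] with Z h0 h1
    unfold pZ
    rw [Real.div_rpow h0 (Nat.cast_nonneg Z)]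
  have hlow : Tendsto (fun Z : ℕ => (f Z) ^ ((1:ℝ)/3) / pZ Z - (pZ Z)⁻¹) atTop
      (nhds ((6:ℝ) ^ ((1:ℝ)/3))) := by
    have := hgg.sub tendsto_pZ_inv
    simpa using this
  refine tendsto_of_tendsto_of_tendsto_of_le_of_le' hlow hgg ?_ ?_
  · filter_upwards [hev, eventually_ge_atTop 1] with Z h0 h1
    have hp := pZ_pos h1
    have hfl : (f Z) ^ ((1:ℝ)/3) - 1 ≤ (⌊(f Z) ^ ((1:ℝ)/3)⌋₊ : ℝ) :=
      le_of_lt (Nat.sub_one_lt_floor _)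
    have he : (f Z) ^ ((1:ℝ)/3) / pZ Z - (pZ Z)⁻¹ = ((f Z) ^ ((1:ℝ)/3) - 1) / pZ Z := by
      field_simp
    rw [he]
    gcongr
  · filter_upwards [hev, eventually_ge_atTop 1] with Z h0 h1
    have hp := pZ_pos h1
    have hfl : (⌊(f Z) ^ ((1:ℝ)/3)⌋₊ : ℝ) ≤ (f Z) ^ ((1:ℝ)/3) := Nat.floor_le (by positivity)
    gcongr


/-- prediction of the Madelung rule in the large-`Z` limit: for every
`λ > 0`, with `ℓ_Z = ⌈λ Z^{1/3}⌉`, the normalized Madelung occupation numbers converge: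
`N_{ℓ_Z}(Z) / (2(2ℓ_Z+1) Z^{1/3}) → max{6^{1/3} − 2λ, 0} = κ^Madelung(λ)`. -/
theorem madelung_occupation_limit (lam : ℝ) (hlam : 0 < lam) :
    Tendsto (fun Z : ℕ =>
        madelungN (⌈lam * (Z : ℝ) ^ ((1:ℝ)/3)⌉₊) Z /
          (2 * (2 * ((⌈lam * (Z : ℝ) ^ ((1:ℝ)/3)⌉₊ : ℕ) : ℝ) + 1) * (Z : ℝ) ^ ((1:ℝ)/3)))
      atTop (nhds (max ((6:ℝ) ^ ((1:ℝ)/3) - 2 * lam) 0)) := by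
  show Tendsto (fun Z : ℕ => madelungN (⌈lam * pZ Z⌉₊) Z /
      (2 * (2 * ((⌈lam * pZ Z⌉₊ : ℕ) : ℝ) + 1) * pZ Z)) atTop
    (nhds (max ((6:ℝ) ^ ((1:ℝ)/3) - 2 * lam) 0))
  set L : ℕ → ℕ := fun Z => ⌈lam * pZ Z⌉₊ with hLdef
  set C : ℕ → ℝ := fun Z => 2 * (2 * ((L Z : ℕ) : ℝ) + 1) with hCdef
  -- limit of L Z / pZ Z
  have hL : Tendsto (fun Z => (L Z : ℝ) / pZ Z) atTop (nhds lam) := by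
    have hup : Tendsto (fun Z : ℕ => lam + (pZ Z)⁻¹) atTop (nhds lam) := by
      have := (tendsto_const_nhds : Tendsto (fun _ : ℕ => lam) atTop (nhds lam)).add tendsto_pZ_inv
      simpa using this
    refine tendsto_of_tendsto_of_tendsto_of_le_of_le'
      (tendsto_const_nhds (x := lam)) hup ?_ ?_
    · filter_upwards [eventually_ge_atTop 1] with Z h1
      have hp := pZ_pos h1
      rw [le_div_iff₀ hp]
      exact Nat.le_ceil _
    · filter_upwards [eventually_ge_atTop 1] with Z h1
      have hp := pZ_pos h1
      rw [div_le_iff₀ hp]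
      have := le_of_lt (Nat.ceil_lt_add_one (by positivity : 0 ≤ lam * pZ Z))
      calc (L Z : ℝ) ≤ lam * pZ Z + 1 := this
        _ ≤ (lam + (pZ Z)⁻¹) * pZ Z := by
            rw [add_mul]
            field_simp
            exact le_rfl
  -- limit of C Z / pZ Z
  have hCp : Tendsto (fun Z => C Z / pZ Z) atTop (nhds (4 * lam)) := by
    have h1 : Tendsto (fun Z => 4 * ((L Z : ℝ) / pZ Z) + 2 * (pZ Z)⁻¹) atTop
        (nhds (4 * lam)) := by
      have := (hL.const_mul 4).add (tendsto_pZ_inv.const_mul 2)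
      simpa using this
    refine h1.congr' ?_
    filter_upwards [eventually_ge_atTop 1] with Z h1
    have hp := (pZ_pos h1).ne'
    rw [hCdef]
    field_simp
    ring
  have hCZ : Tendsto (fun Z : ℕ => C Z / (Z:ℝ)) atTop (nhds 0) :=
    tendsto_div_Z_of_div_pZ _ _ hCp
  -- the two cube-root sequences
  set tt : ℕ → ℕ := fun Z => ⌊(6*(Z:ℝ) - 6*(C Z)) ^ ((1:ℝ)/3)⌋₊ with httdef
  set uu : ℕ → ℕ := fun Z => ⌊(6*(Z:ℝ) + 12*((L Z : ℝ)+1)^2) ^ ((1:ℝ)/3)⌋₊ with huudef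
  have htf : Tendsto (fun Z : ℕ => (6*(Z:ℝ) - 6*(C Z)) / (Z:ℝ)) atTop (nhds 6) := by
    have h1 : Tendsto (fun Z : ℕ => 6 - 6 * (C Z / (Z:ℝ))) atTop (nhds 6) := by
      have := (tendsto_const_nhds : Tendsto (fun _ : ℕ => (6:ℝ)) atTop (nhds 6)).sub
        (hCZ.const_mul 6)
      simpa using this
    refine h1.congr' ?_
    filter_upwards [eventually_ge_atTop 1] with Z h1
    have hZ0 : ((Z:ℝ)) ≠ 0 := by positivity
    field_simp
  have hL1 : Tendsto (fun Z => ((L Z : ℝ) + 1) / pZ Z) atTop (nhds lam) := by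
    have := hL.add tendsto_pZ_inv
    simp only [add_zero] at this
    refine this.congr' ?_
    filter_upwards [eventually_ge_atTop 1] with Z h1
    have hp := (pZ_pos h1).ne'
    field_simp
  have huf : Tendsto (fun Z : ℕ => (6*(Z:ℝ) + 12*((L Z : ℝ)+1)^2) / (Z:ℝ)) atTop (nhds 6) := by
    have h2 : Tendsto (fun Z : ℕ => 6 + 12 * ((((L Z : ℝ) + 1) / pZ Z)^2 * (pZ Z)⁻¹)) atTop
        (nhds 6) := by
      have := ((hL1.pow 2).mul tendsto_pZ_inv).const_mul 12
      have h3 := (tendsto_const_nhds : Tendsto (fun _ : ℕ => (6:ℝ)) atTop (nhds 6)).add this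
      simpa using h3
    refine h2.congr' ?_
    filter_upwards [eventually_ge_atTop 1] with Z h1
    have hp := pZ_pos h1
    have hZc : (Z:ℝ) = (pZ Z)^(3:ℕ) := pZ_cube.symm
    rw [hZc]
    field_simp
  have htt : Tendsto (fun Z => (tt Z : ℝ) / pZ Z) atTop (nhds ((6:ℝ) ^ ((1:ℝ)/3))) :=
    tendsto_floor_cbrt _ htf
  have huu : Tendsto (fun Z => (uu Z : ℝ) / pZ Z) atTop (nhds ((6:ℝ) ^ ((1:ℝ)/3))) :=
    tendsto_floor_cbrt _ huf
  -- squeeze sequences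
  set seq1 : ℕ → ℝ := fun Z => max (((tt Z : ℝ) - 2*(L Z : ℝ) - 2) / pZ Z) 0 with hseq1
  set seq2 : ℕ → ℝ := fun Z => max (((uu Z : ℝ) - 2*(L Z : ℝ)) / pZ Z) 0 with hseq2
  have hs1lim : Tendsto seq1 atTop (nhds (max ((6:ℝ) ^ ((1:ℝ)/3) - 2 * lam) 0)) := by
    have hin : Tendsto (fun Z => ((tt Z : ℝ) - 2*(L Z : ℝ) - 2) / pZ Z) atTop
        (nhds ((6:ℝ) ^ ((1:ℝ)/3) - 2 * lam)) := by
      have := (htt.sub (hL.const_mul 2)).sub (tendsto_pZ_inv.const_mul 2)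
      have h2 : (6:ℝ) ^ ((1:ℝ)/3) - 2 * lam - 2 * 0 = (6:ℝ) ^ ((1:ℝ)/3) - 2 * lam := by ring
      rw [h2] at this
      refine this.congr ?_
      intro Z
      rw [sub_div, sub_div]
      ring
    exact hin.max tendsto_const_nhds
  have hs2lim : Tendsto seq2 atTop (nhds (max ((6:ℝ) ^ ((1:ℝ)/3) - 2 * lam) 0)) := by
    have hin : Tendsto (fun Z => ((uu Z : ℝ) - 2*(L Z : ℝ)) / pZ Z) atTop
        (nhds ((6:ℝ) ^ ((1:ℝ)/3) - 2 * lam)) := by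
      have := htt.sub (hL.const_mul 2)
      have h4 := huu.sub (hL.const_mul 2)
      refine h4.congr ?_
      intro Z
      rw [sub_div]
      ring
    exact hin.max tendsto_const_nhds
  -- eventual positivity of 6Z - 6C
  have hev6 : ∀ᶠ Z : ℕ in atTop, 0 ≤ 6*(Z:ℝ) - 6*(C Z) := by
    filter_upwards [hCZ.eventually (eventually_le_nhds (by norm_num : (0:ℝ) < 1)),
      eventually_ge_atTop 1] with Z h1 h2
    have hZ0 : (0:ℝ) < (Z:ℝ) := by exact_mod_cast h2
    have := (div_le_one hZ0).mp h1
    linarith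
  -- final squeeze
  refine tendsto_of_tendsto_of_tendsto_of_le_of_le' hs1lim hs2lim ?_ ?_
  · -- seq1 ≤ value
    filter_upwards [hev6, eventually_ge_atTop 1] with Z h6 h1
    have hp := pZ_pos h1
    have hC0 : (0:ℝ) < C Z := by rw [hCdef]; positivity
    have hCp0 : 0 < C Z * pZ Z := mul_pos hC0 hp
    have hN0 := madelungN_nonneg (L Z) Z
    -- lower bound on N
    have ht3 : ((tt Z : ℝ))^3 ≤ 6*(Z:ℝ) - 6*(C Z) := by
      have h0 : (tt Z : ℝ) ≤ (6*(Z:ℝ) - 6*(C Z)) ^ ((1:ℝ)/3) :=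
        Nat.floor_le (by positivity)
      calc ((tt Z : ℝ))^3 ≤ ((6*(Z:ℝ) - 6*(C Z)) ^ ((1:ℝ)/3))^3 := by
            apply pow_le_pow_left₀ (by positivity) h0
        _ = 6*(Z:ℝ) - 6*(C Z) := by
            rw [← Real.rpow_natCast ((6*(Z:ℝ) - 6*(C Z)) ^ ((1:ℝ)/3)) 3,
              ← Real.rpow_mul h6]
            norm_num
    have hNl := madelungN_lower (L Z) Z (tt Z) ht3
    apply max_le
    · rw [div_le_div_iff₀ hp hCp0]
      calc ((tt Z : ℝ) - 2*(L Z : ℝ) - 2) * (C Z * pZ Z)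
          = (C Z * ((tt Z : ℝ) - 2*(L Z : ℝ) - 2)) * pZ Z := by ring
        _ ≤ madelungN (L Z) Z * pZ Z := by
            apply mul_le_mul_of_nonneg_right hNl (le_of_lt hp)
    · positivity
  · -- value ≤ seq2
    filter_upwards [eventually_ge_atTop 1] with Z h1
    have hp := pZ_pos h1
    have hC0 : (0:ℝ) < C Z := by rw [hCdef]; positivity
    have hCp0 : 0 < C Z * pZ Z := mul_pos hC0 hp
    have hu : ∀ ν : ℕ, L Z + 1 ≤ ν → (ν + L Z)^3 < 6*Z + 12*(L Z + 1)^2 → ν + L Z ≤ uu Z := by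
      intro ν hν h3
      apply Nat.le_floor
      have h4 : ((ν + L Z : ℕ) : ℝ)^3 ≤ 6*(Z:ℝ) + 12*((L Z : ℝ)+1)^2 := by
        have := le_of_lt h3
        have h5 : ((ν + L Z)^3 : ℕ) ≤ ((6*Z + 12*(L Z + 1)^2 : ℕ)) := this
        calc ((ν + L Z : ℕ) : ℝ)^3 = (((ν + L Z)^3 : ℕ) : ℝ) := by push_cast; ring
          _ ≤ ((6*Z + 12*(L Z + 1)^2 : ℕ) : ℝ) := by exact_mod_cast h5
          _ = 6*(Z:ℝ) + 12*((L Z : ℝ)+1)^2 := by push_cast; ring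
      calc ((ν + L Z : ℕ) : ℝ)
          = ((((ν + L Z : ℕ) : ℝ))^(3:ℕ)) ^ ((1:ℝ)/3) := by
            rw [← Real.rpow_natCast (((ν + L Z : ℕ) : ℝ)) 3,
              ← Real.rpow_mul (Nat.cast_nonneg _)]
            norm_num
        _ ≤ (6*(Z:ℝ) + 12*((L Z : ℝ)+1)^2) ^ ((1:ℝ)/3) := by
            apply Real.rpow_le_rpow (by positivity) (by exact_mod_cast h4) (by norm_num)
    have hNu := madelungN_upper (L Z) Z (uu Z) hu
    rw [div_le_iff₀ hCp0]
    have hmax : max (((uu Z : ℝ) - 2*(L Z : ℝ)) / pZ Z) 0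
        = max ((uu Z : ℝ) - 2*(L Z : ℝ)) 0 / pZ Z := by
      rw [eq_div_iff (ne_of_gt hp)]
      rcases le_total ((uu Z : ℝ) - 2*(L Z : ℝ)) 0 with h | h
      · rw [max_eq_right h, max_eq_right (by apply div_nonpos_of_nonpos_of_nonneg h (le_of_lt hp))]
        ring
      · rw [max_eq_left h, max_eq_left (by positivity)]
        field_simp
    calc madelungN (L Z) Z ≤ C Z * max ((uu Z : ℝ) - 2*(L Z : ℝ)) 0 := hNu
      _ = max ((uu Z : ℝ) - 2*(L Z : ℝ)) 0 / pZ Z * (C Z * pZ Z) := by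
          field_simp
      _ = seq2 Z * (C Z * pZ Z) := by simp only [hseq2]; rw [hmax]
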